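/- Let T be a pruned tree on a non-empty countable set A, let X be the set of infinite branches of T with its cylinder-set topology, and let f : X → ℝ. Suppose there is a non-empty closed set C ⊆ X such that the oscillation of f restricted to C is bounded away from zero, i.e., inf_{x ∈ C} osc_f(C,x) > 0, where osc_f(C,x) = inf over s ∈ T with x ∈ O(s) of sup_{y,z ∈ O(s) ∩ C} |f(y) − f(z)|. Then Player I has a winning strategy in the game Γ'(f). -/

import Mathlib

open Filter Topology

/-- The initial segment `(x₀, …, x_{n-1})` of an infinite sequence `x`. -/
def initSeg {β : Type*} (x : ℕ → β) (n : ℕ) : List β :=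
  List.ofFn fun i : Fin n => x i

/-- `T` is a pruned tree on `A`: it contains the empty sequence, is closed under
prefixes, and every element has a proper extension in `T`. -/
def IsPrunedTree {A : Type*} (T : Set (List A)) : Prop :=
  [] ∈ T ∧ (∀ s ∈ T, ∀ t : List A, t <+: s → t ∈ T) ∧ ∀ s ∈ T, ∃ a : A, s ++ [a] ∈ T

/-- The space `X` of infinite branches of the tree `T`, topologized as a subspace of
the product `ℕ → A` (with `A` discrete); this is exactly the cylinder-set topology. -/
abbrev Branches {A : Type*} (T : Set (List A)) : Type _ :=
  {x : ℕ → A // ∀ n : ℕ, initSeg x n ∈ T}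

/-- The cylinder set `O(s)` of all branches with initial segment `s`. -/
def cyl {A : Type*} (T : Set (List A)) (s : List A) : Set (Branches T) :=
  {x | initSeg x.val s.length = s}

/-- `f : X → ℝ` is a limsup function: there is `u` defined on finite sequences with
`f x = limsup_{t → ∞} u (x₀, …, x_t)` for every branch `x` (the limsup being computed
in the extended reals and required to equal the real number `f x`). -/
def IsLimsupFunction {A : Type*} {T : Set (List A)} (f : Branches T → ℝ) : Prop :=
  ∃ u : List A → ℝ, ∀ x : Branches T,
    (f x : EReal) = Filter.limsup (fun t : ℕ => (u (initSeg x.val (t + 1)) : EReal)) Filter.atTop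

/-- `f` is of Baire class 1: a pointwise limit of continuous functions. -/
def BaireClassOne {X : Type*} [TopologicalSpace X] (f : X → ℝ) : Prop :=
  ∃ g : ℕ → X → ℝ, (∀ n, Continuous (g n)) ∧
    ∀ x, Filter.Tendsto (fun n => g n x) Filter.atTop (nhds (f x))

/-- A Cantor set: a subset homeomorphic to the Cantor space `2^ℕ`. -/
def IsCantorSet {X : Type*} [TopologicalSpace X] (C : Set X) : Prop :=
  Nonempty (C ≃ₜ (ℕ → Bool))

/-- A Bernstein set: neither it nor its complement contains a nonempty perfect set. -/
def IsBernsteinSet {X : Type*} [TopologicalSpace X] (B : Set X) : Prop :=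
  ∀ P : Set X, Perfect P → P.Nonempty → ¬ P ⊆ B ∧ ¬ P ⊆ Bᶜ

/-- A co-analytic set: the complement of an analytic set. -/
def IsCoanalytic {X : Type*} [TopologicalSpace X] (s : Set X) : Prop :=
  MeasureTheory.AnalyticSet sᶜ

/-- The sequence of moves produced by Player I's strategy `σ` against the sequence `v`
of moves of Player II: Player I's `n`-th move depends on `(v₀, …, v_{n-1})`. -/
def playI {A M : Type*} (σ : List M → A) (v : ℕ → M) : ℕ → A :=
  fun n => σ (initSeg v n)

/-- Player II has a winning strategy in the game `Γ(f)`: a strategy for Player II assigns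
to each position `(x₀, …, x_t)` of moves of Player I a real number `v_t` (Player II's own
previous moves being determined), and it is winning if for every run, i.e. every branch
`x` that Player I may produce, `f x = limsup_{t → ∞} v_t`. -/
def PlayerIIWinsGamma {A : Type*} {T : Set (List A)} (f : Branches T → ℝ) : Prop :=
  ∃ τ : List A → ℝ, ∀ x : Branches T,
    (f x : EReal) = Filter.limsup (fun t : ℕ => (τ (initSeg x.val (t + 1)) : EReal)) Filter.atTop

/-- Player I has a winning strategy in the game `Γ_R(f)` where Player II's moves are
restricted to `R`: a strategy for Player I assigns to each position `(v₀, …, v_{n-1})` of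
moves of Player II a point of `A`, and it is winning if against every sequence of moves
of Player II in `R` the moves of Player I are legal (all initial segments lie in `T`) and
the resulting branch `x` satisfies `f x ≠ limsup_{t → ∞} v_t`. -/
def PlayerIWinsGammaR {A : Type*} {T : Set (List A)} (R : Set ℝ) (f : Branches T → ℝ) :
    Prop :=
  ∃ σ : List ℝ → A, ∀ v : ℕ → ℝ, (∀ t, v t ∈ R) →
    ∃ h : ∀ n : ℕ, initSeg (playI σ v) n ∈ T,
      (f ⟨playI σ v, h⟩ : EReal) ≠ Filter.limsup (fun t : ℕ => (v t : EReal)) Filter.atTop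

/-- Player I has a winning strategy in the game `Γ(f)`. -/
def PlayerIWinsGamma {A : Type*} {T : Set (List A)} (f : Branches T → ℝ) : Prop :=
  ∃ σ : List ℝ → A, ∀ v : ℕ → ℝ,
    ∃ h : ∀ n : ℕ, initSeg (playI σ v) n ∈ T,
      (f ⟨playI σ v, h⟩ : EReal) ≠ Filter.limsup (fun t : ℕ => (v t : EReal)) Filter.atTop

/-- Player II has a winning strategy in the game `Γ'(f)`, in which Player II's moves are
pairs `(v_t, w_t)` of reals and Player II wins a run iff
`f x = limsup_{t → ∞} v_t = liminf_{t → ∞} w_t`. -/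
def PlayerIIWinsGamma' {A : Type*} {T : Set (List A)} (f : Branches T → ℝ) : Prop :=
  ∃ τ : List A → ℝ × ℝ, ∀ x : Branches T,
    (f x : EReal) =
      Filter.limsup (fun t : ℕ => ((τ (initSeg x.val (t + 1))).1 : EReal)) Filter.atTop ∧
    (f x : EReal) =
      Filter.liminf (fun t : ℕ => ((τ (initSeg x.val (t + 1))).2 : EReal)) Filter.atTop

/-- Player I has a winning strategy in the game `Γ'(f)`. -/
def PlayerIWinsGamma' {A : Type*} {T : Set (List A)} (f : Branches T → ℝ) : Prop :=
  ∃ σ : List (ℝ × ℝ) → A, ∀ v : ℕ → ℝ × ℝ,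
    ∃ h : ∀ n : ℕ, initSeg (playI σ v) n ∈ T,
      ¬ ((f ⟨playI σ v, h⟩ : EReal) =
            Filter.limsup (fun t : ℕ => ((v t).1 : EReal)) Filter.atTop ∧
         (f ⟨playI σ v, h⟩ : EReal) =
            Filter.liminf (fun t : ℕ => ((v t).2 : EReal)) Filter.atTop)

/-- The oscillation of `f` restricted to `C` at the point `x`:
`osc_f(C,x) = inf_{s ∈ T, x ∈ O(s)} sup_{y,z ∈ O(s) ∩ C} |f y - f z|` (computed in the
extended reals). -/
noncomputable def oscOn {A : Type*} {T : Set (List A)} (f : Branches T → ℝ)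
    (C : Set (Branches T)) (x : Branches T) : EReal :=
  ⨅ (s : List A) (_ : s ∈ T) (_ : x ∈ cyl T s),
    ⨆ y ∈ cyl T s ∩ C, ⨆ z ∈ cyl T s ∩ C, ((|f y - f z| : ℝ) : EReal)


noncomputable def stepFn {A : Type*} {T : Set (List A)} (f : Branches T → ℝ) (δ : ℝ)
    (Q : Branches T → ℕ → Branches T) (s : Branches T × Bool) (m : ℝ × ℝ) (n : ℕ) :
    Branches T × Bool :=
  if s.2 = true then
    if f s.1 - δ ≤ m.1 then (Q s.1 n, false) else (s.1, true)
  else (s.1, if m.2 ≤ f s.1 + δ then true else false)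

noncomputable def rstateFn {A : Type*} {T : Set (List A)} (f : Branches T → ℝ) (δ : ℝ)
    (Q : Branches T → ℕ → Branches T) (p0 : Branches T) :
    List (ℝ × ℝ) → Branches T × Bool
  | [] => (p0, false)
  | m :: h => stepFn f δ Q (rstateFn f δ Q p0 h) m h.length

/-- If there is a non-empty closed set `C ⊆ X` on which the oscillation of `f|_C` is
bounded away from zero, then Player I has a winning strategy in `Γ'(f)`. -/
theorem playerI_wins_gamma'_of_osc_bounded_away
    {A : Type*} [Countable A] [Nonempty A] [TopologicalSpace A] [DiscreteTopology A]
    {T : Set (List A)} (hT : IsPrunedTree T) (f : Branches T → ℝ)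
    (C : Set (Branches T)) (hCne : C.Nonempty) (hCclosed : IsClosed C)
    (hosc : ∃ ε : ℝ, 0 < ε ∧ ∀ x ∈ C, (ε : EReal) ≤ oscOn f C x) :
    PlayerIWinsGamma' f := by
  classical
  obtain ⟨ε, hε, hoscC⟩ := hosc
  set δ : ℝ := ε / 100 with hδdef
  have hδ : 0 < δ := by positivity
  obtain ⟨p0, hp0⟩ := hCne
  -- choice of a far point in a refined cylinder
  have hQex : ∀ (p : Branches T) (n : ℕ), ∃ q : Branches T, p ∈ C →
      q ∈ C ∧ (∀ k, k ≤ n → q.val k = p.val k) ∧ ε / 4 ≤ |f q - f p| := by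
    intro p n
    by_cases hp : p ∈ C
    · have hsT : initSeg p.val (n+1) ∈ T := p.prop (n+1)
      have hpcyl : p ∈ cyl T (initSeg p.val (n+1)) := by
        show initSeg p.val (initSeg p.val (n+1)).length = initSeg p.val (n+1)
        rw [show (initSeg p.val (n+1)).length = n+1 from by simp [initSeg]]
      have h1 : (ε : EReal) ≤ ⨆ y ∈ cyl T (initSeg p.val (n+1)) ∩ C,
          ⨆ z ∈ cyl T (initSeg p.val (n+1)) ∩ C, ((|f y - f z| : ℝ) : EReal) := by
        refine le_trans (hoscC p hp) ?_
        exact iInf_le_of_le (initSeg p.val (n+1)) (iInf_le_of_le hsT (iInf_le _ hpcyl))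
      have h2 : ((ε/2 : ℝ) : EReal) < ⨆ y ∈ cyl T (initSeg p.val (n+1)) ∩ C,
          ⨆ z ∈ cyl T (initSeg p.val (n+1)) ∩ C, ((|f y - f z| : ℝ) : EReal) :=
        lt_of_lt_of_le (by exact_mod_cast (by linarith : ε/2 < ε)) h1
      rw [lt_iSup_iff] at h2
      obtain ⟨y, h2⟩ := h2
      rw [lt_iSup_iff] at h2
      obtain ⟨hy, h2⟩ := h2
      rw [lt_iSup_iff] at h2
      obtain ⟨z, h2⟩ := h2
      rw [lt_iSup_iff] at h2
      obtain ⟨hz, h2⟩ := h2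
      have hyz : ε/2 < |f y - f z| := by exact_mod_cast h2
      have hagr : ∀ (q : Branches T), q ∈ cyl T (initSeg p.val (n+1)) →
          ∀ k, k ≤ n → q.val k = p.val k := by
        intro q hq k hk
        have hq' : initSeg q.val (n+1) = initSeg p.val (n+1) := by
          have h3 := hq
          simp only [cyl, Set.mem_setOf_eq, initSeg, List.length_ofFn] at h3
          simpa [initSeg] using h3
        have h4 := List.ofFn_inj.mp hq'
        exact congrFun h4 ⟨k, Nat.lt_succ_of_le hk⟩
      by_cases hcase : ε/4 ≤ |f y - f p|
      · exact ⟨y, fun _ => ⟨hy.2, hagr y hy.1, hcase⟩⟩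
      · refine ⟨z, fun _ => ⟨hz.2, hagr z hz.1, ?_⟩⟩
        have h3 : |f y - f z| ≤ |f y - f p| + |f p - f z| := abs_sub_le _ _ _
        have h5 : |f z - f p| = |f p - f z| := abs_sub_comm _ _
        push_neg at hcase
        linarith
    · exact ⟨p, fun h => absurd h hp⟩
  choose Q hQ using hQex
  set σ : List (ℝ × ℝ) → A := fun l => (rstateFn f δ Q p0 l.reverse).1.val l.length with hσ
  refine ⟨σ, ?_⟩
  intro v
  set S : ℕ → Branches T × Bool := fun n => rstateFn f δ Q p0 (initSeg v n).reverse with hSdef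
  have hS0 : S 0 = (p0, false) := by
    show rstateFn f δ Q p0 (initSeg v 0).reverse = _
    rw [show (initSeg v 0) = ([] : List (ℝ × ℝ)) from by simp [initSeg]]
    rfl
  have hrev : ∀ n, (initSeg v (n+1)).reverse = v n :: (initSeg v n).reverse := by
    intro n
    have h3 : initSeg v (n+1) = (initSeg v n).concat (v n) := by
      show List.ofFn (fun i : Fin (n+1) => v i) = (List.ofFn fun i : Fin n => v i).concat (v n)
      rw [List.ofFn_succ']
      rfl
    rw [h3, List.concat_eq_append, List.reverse_append]
    simp
  have hlen : ∀ n, ((initSeg v n).reverse : List (ℝ × ℝ)).length = n := by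
    intro n; simp [initSeg]
  have hSstep : ∀ n, S (n+1) = stepFn f δ Q (S n) (v n) n := by
    intro n
    show rstateFn f δ Q p0 (initSeg v (n+1)).reverse = _
    rw [hrev n]
    show stepFn f δ Q (rstateFn f δ Q p0 (initSeg v n).reverse) (v n)
      ((initSeg v n).reverse).length = _
    rw [hlen n]
  have hplay : ∀ n, playI σ v n = (S n).1.val n := by
    intro n
    show (rstateFn f δ Q p0 (initSeg v n).reverse).1.val (initSeg v n).length = _
    rw [show (initSeg v n).length = n from by simp [initSeg]]
  have hcases : ∀ n,
      ((S n).2 = true ∧ f (S n).1 - δ ≤ (v n).1 ∧ S (n+1) = (Q (S n).1 n, false)) ∨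
      ((S n).2 = true ∧ ¬(f (S n).1 - δ ≤ (v n).1) ∧ S (n+1) = ((S n).1, true)) ∨
      ((S n).2 = false ∧ (v n).2 ≤ f (S n).1 + δ ∧ S (n+1) = ((S n).1, true)) ∨
      ((S n).2 = false ∧ ¬((v n).2 ≤ f (S n).1 + δ) ∧ S (n+1) = ((S n).1, false)) := by
    intro n
    rcases hb : (S n).2 with _ | _
    · by_cases hw : (v n).2 ≤ f (S n).1 + δ
      · refine Or.inr (Or.inr (Or.inl ⟨rfl, hw, ?_⟩))
        rw [hSstep n]; simp [stepFn, hb, hw]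
      · refine Or.inr (Or.inr (Or.inr ⟨rfl, hw, ?_⟩))
        rw [hSstep n]; simp [stepFn, hb, hw]
    · by_cases hv : f (S n).1 - δ ≤ (v n).1
      · refine Or.inl ⟨rfl, hv, ?_⟩
        rw [hSstep n]; simp [stepFn, hb, hv]
      · refine Or.inr (Or.inl ⟨rfl, hv, ?_⟩)
        rw [hSstep n]; simp [stepFn, hb, hv]
  have hmem : ∀ n, (S n).1 ∈ C := by
    intro n
    induction n with
    | zero => rw [hS0]; exact hp0
    | succ n ih =>
      rcases hcases n with ⟨_, _, h3⟩ | ⟨_, _, h3⟩ | ⟨_, _, h3⟩ | ⟨_, _, h3⟩ <;> rw [h3]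
      · exact (hQ _ n ih).1
      all_goals exact ih
  have hagree : ∀ n k, k ≤ n → (S n).1.val k = (S k).1.val k := by
    intro n
    induction n with
    | zero =>
      intro k hk
      have : k = 0 := Nat.le_zero.mp hk
      subst this; rfl
    | succ n ih =>
      intro k hk
      rcases Nat.eq_or_lt_of_le hk with rfl | hk'
      · rfl
      · have hk2 : k ≤ n := Nat.lt_succ_iff.mp hk'
        rcases hcases n with ⟨_, _, h3⟩ | ⟨_, _, h3⟩ | ⟨_, _, h3⟩ | ⟨_, _, h3⟩ <;> rw [h3]
        · rw [show (Q (S n).1 n, false).1 = Q (S n).1 n from rfl,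
            (hQ (S n).1 n (hmem n)).2.1 k hk2]
          exact ih k hk2
        all_goals exact ih k hk2
  have hleg : ∀ n, initSeg (playI σ v) n ∈ T := by
    intro n
    have h3 : initSeg (playI σ v) n = initSeg (S n).1.val n := by
      simp only [initSeg]
      congr 1
      funext i
      rw [hplay i.val]
      exact (hagree n i.val (Nat.le_of_lt i.isLt)).symm
    rw [h3]
    exact (S n).1.prop n
  refine ⟨hleg, ?_⟩
  rintro ⟨h1, h2⟩
  set L : ℝ := f ⟨playI σ v, hleg⟩ with hL
  have hev1 : ∀ᶠ t in atTop, (v t).1 < L + δ := by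
    have h3 : limsup (fun t : ℕ => ((v t).1 : EReal)) atTop < ((L + δ : ℝ) : EReal) := by
      rw [← h1]; exact_mod_cast (by linarith : L < L + δ)
    filter_upwards [eventually_lt_of_limsup_lt h3] with t ht
    exact_mod_cast ht
  have hev2 : ∀ᶠ t in atTop, L - δ < (v t).2 := by
    have h3 : ((L - δ : ℝ) : EReal) < liminf (fun t : ℕ => ((v t).2 : EReal)) atTop := by
      rw [← h2]; exact_mod_cast (by linarith : L - δ < L)
    filter_upwards [eventually_lt_of_lt_liminf h3] with t ht
    exact_mod_cast ht
  obtain ⟨t₀, ht₀⟩ := eventually_atTop.mp (hev1.and hev2)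
  by_cases hstab : ∃ N, ∀ n, N ≤ n → (S (n+1)).1 = (S n).1
  · -- stable case: eventually Player I follows a fixed branch
    obtain ⟨N, hN⟩ := hstab
    have hPeq : ∀ n, N ≤ n → (S n).1 = (S N).1 := by
      intro n hn
      induction n, hn using Nat.le_induction with
      | base => rfl
      | succ n hn ih => rw [hN n hn]; exact ih
    have hxP : (⟨playI σ v, hleg⟩ : Branches T) = (S N).1 := by
      apply Subtype.ext
      funext k
      have h1' := hagree (max k N) k (le_max_left k N)
      rw [hPeq (max k N) (le_max_right k N)] at h1'
      show playI σ v k = (S N).1.val k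
      rw [hplay k]; exact h1'.symm
    have hfP : L = f (S N).1 := by rw [hL, hxP]
    have hnosw : ∀ n, N ≤ n →
        ¬((S n).2 = true ∧ f (S n).1 - δ ≤ (v n).1 ∧ S (n+1) = (Q (S n).1 n, false)) := by
      rintro n hn ⟨-, -, h3⟩
      have h4 : Q (S n).1 n = (S n).1 := by
        have h5 : (S (n+1)).1 = Q (S n).1 n := by rw [h3]
        rw [← h5]; exact hN n hn
      have hfar := (hQ (S n).1 n (hmem n)).2.2
      rw [h4, sub_self, abs_zero] at hfar
      linarith
    by_cases hTr : ∃ M, N ≤ M ∧ (S M).2 = true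
    · obtain ⟨M, hM, hMtrue⟩ := hTr
      have hstepTrue : ∀ n, N ≤ n → (S n).2 = true →
          (v n).1 < f (S N).1 - δ ∧ (S (n+1)).2 = true := by
        intro n hn htrue
        rcases hcases n with hc | ⟨-, hv', hs⟩ | ⟨hb, -, -⟩ | ⟨hb, -, -⟩
        · exact absurd hc (hnosw n hn)
        · constructor
          · have h6 := not_le.mp hv'
            rw [hPeq n hn] at h6
            exact h6
          · rw [hs]
        · rw [hb] at htrue; exact Bool.noConfusion htrue
        · rw [hb] at htrue; exact Bool.noConfusion htrue
      have hflagT : ∀ n, M ≤ n → (S n).2 = true := by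
        intro n hn
        induction n, hn using Nat.le_induction with
        | base => exact hMtrue
        | succ n hn ih => exact (hstepTrue n (le_trans hM hn) ih).2
      have hbound : ∀ᶠ t in atTop, (fun t : ℕ => ((v t).1 : EReal)) t ≤
          ((f (S N).1 - δ : ℝ) : EReal) := by
        rw [eventually_atTop]
        refine ⟨M, fun n hn => ?_⟩
        have h9 := (hstepTrue n (le_trans hM hn) (hflagT n hn)).1
        show ((v n).1 : EReal) ≤ ((f (S N).1 - δ : ℝ) : EReal)
        exact_mod_cast le_of_lt h9
      have h7 : (L : EReal) ≤ ((f (S N).1 - δ : ℝ) : EReal) := by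
        rw [h1]; exact limsup_le_of_le (by isBoundedDefault) hbound
      have h8 : L ≤ f (S N).1 - δ := by exact_mod_cast h7
      rw [hfP] at h8
      linarith
    · push_neg at hTr
      have hfalse : ∀ n, N ≤ n → (S n).2 = false :=
        fun n hn => Bool.eq_false_iff.mpr (hTr n hn)
      have hw : ∀ n, N ≤ n → f (S N).1 + δ < (v n).2 := by
        intro n hn
        rcases hcases n with hc | ⟨hb, -, -⟩ | ⟨-, -, hs⟩ | ⟨-, hw', -⟩
        · exact absurd hc (hnosw n hn)
        · rw [hfalse n hn] at hb; exact Bool.noConfusion hb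
        · have h5 : (S (n+1)).2 = true := by rw [hs]
          rw [hfalse (n+1) (le_trans hn (Nat.le_succ n))] at h5
          exact Bool.noConfusion h5
        · have h6 := not_le.mp hw'
          rw [hPeq n hn] at h6
          exact h6
      have hbound : ∀ᶠ t in atTop, ((f (S N).1 + δ : ℝ) : EReal) ≤
          (fun t : ℕ => ((v t).2 : EReal)) t := by
        rw [eventually_atTop]
        refine ⟨N, fun n hn => ?_⟩
        show ((f (S N).1 + δ : ℝ) : EReal) ≤ ((v n).2 : EReal)
        exact_mod_cast le_of_lt (hw n hn)
      have h7 : ((f (S N).1 + δ : ℝ) : EReal) ≤ (L : EReal) := by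
        rw [h2]; exact le_liminf_of_le (by isBoundedDefault) hbound
      have h8 : f (S N).1 + δ ≤ L := by exact_mod_cast h7
      rw [hfP] at h8
      linarith
  · -- infinitely many switches
    push_neg at hstab
    have hflag : ∀ n, (S n).2 = true → ∀ k, k ≤ n → (S k).2 = false →
        ∃ m, k ≤ m ∧ m < n ∧ (S m).1 = (S n).1 ∧ (v m).2 ≤ f (S m).1 + δ := by
      intro n
      induction n with
      | zero =>
        intro htrue k hk hkf
        have : k = 0 := Nat.le_zero.mp hk
        subst this
        rw [hkf] at htrue; exact Bool.noConfusion htrue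
      | succ n ih =>
        intro htrue k hk hkf
        rcases hcases n with ⟨-, -, hs⟩ | ⟨hb, -, hs⟩ | ⟨hb, hw', hs⟩ | ⟨-, -, hs⟩
        · rw [hs] at htrue; exact Bool.noConfusion htrue
        · have hk' : k ≤ n := by
            rcases Nat.eq_or_lt_of_le hk with rfl | h3
            · rw [hkf] at htrue; exact Bool.noConfusion htrue
            · exact Nat.lt_succ_iff.mp h3
          obtain ⟨m, hm1, hm2, hm3, hm4⟩ := ih hb k hk' hkf
          have h5 : (S (n+1)).1 = (S n).1 := by rw [hs]
          exact ⟨m, hm1, Nat.lt_succ_of_lt hm2, by rw [h5]; exact hm3, hm4⟩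
        · have hk' : k ≤ n := by
            rcases Nat.eq_or_lt_of_le hk with rfl | h3
            · rw [hkf] at htrue; exact Bool.noConfusion htrue
            · exact Nat.lt_succ_iff.mp h3
          have h5 : (S (n+1)).1 = (S n).1 := by rw [hs]
          exact ⟨n, hk', Nat.lt_succ_self n, by rw [h5], hw'⟩
        · rw [hs] at htrue; exact Bool.noConfusion htrue
    have key : ∀ n₀, t₀ ≤ n₀ → (S (n₀+1)).1 ≠ (S n₀).1 →
        ∃ n₁, n₀ < n₁ ∧ (S (n₁+1)).1 ≠ (S n₁).1 ∧ (S n₁).1 = (S (n₀+1)).1 ∧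
          (L - 2*δ < f (S n₁).1 ∧ f (S n₁).1 < L + 2*δ) ∧
          (S (n₁+1)).1 = Q (S n₁).1 n₁ := by
      intro n₀ hn₀ hsw₀
      have hf₀ : (S (n₀+1)).2 = false := by
        rcases hcases n₀ with ⟨-, -, hs⟩ | ⟨-, -, hs⟩ | ⟨-, -, hs⟩ | ⟨-, -, hs⟩
        · rw [hs]
        all_goals (exfalso; exact hsw₀ (by rw [hs]))
      have hex : ∃ n, n₀ + 1 ≤ n ∧ (S (n+1)).1 ≠ (S n).1 := by
        obtain ⟨n, hn, hne⟩ := hstab (n₀+1)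
        exact ⟨n, hn, hne⟩
      obtain ⟨hn₁ge, hn₁sw⟩ := Nat.find_spec hex
      set n₁ := Nat.find hex with hn₁def
      have hmin : ∀ m, n₀ + 1 ≤ m → m < n₁ → (S (m+1)).1 = (S m).1 := by
        intro m hm1 hm2
        by_contra hne
        exact Nat.find_min hex hm2 ⟨hm1, hne⟩
      have hconst : ∀ m, n₀ + 1 ≤ m → m ≤ n₁ → (S m).1 = (S (n₀+1)).1 := by
        intro m hm1
        induction m, hm1 using Nat.le_induction with
        | base => intro _; rfl
        | succ m hm ih =>
          intro hm2
          have h3 : m < n₁ := Nat.lt_of_succ_le hm2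
          rw [hmin m hm h3]
          exact ih (le_of_lt h3)
      rcases hcases n₁ with ⟨hb₁, hv₁, hs₁⟩ | ⟨-, -, hs⟩ | ⟨-, -, hs⟩ | ⟨-, -, hs⟩
      · have hn₁t : t₀ ≤ n₁ := le_trans (le_trans hn₀ (Nat.le_succ n₀)) hn₁ge
        have hub : f (S n₁).1 < L + 2*δ := by
          have h3 := (ht₀ n₁ hn₁t).1
          linarith
        obtain ⟨m, hm1, hm2, hm3, hm4⟩ := hflag n₁ hb₁ (n₀+1) hn₁ge hf₀
        have hmt : t₀ ≤ m := le_trans (le_trans hn₀ (Nat.le_succ n₀)) hm1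
        have hlb : L - 2*δ < f (S n₁).1 := by
          have h3 := (ht₀ m hmt).2
          rw [hm3] at hm4
          linarith
        exact ⟨n₁, Nat.lt_of_succ_le hn₁ge, hn₁sw, hconst n₁ hn₁ge le_rfl,
          ⟨hlb, hub⟩, by rw [hs₁]⟩
      all_goals (exfalso; exact hn₁sw (by rw [hs]))
    obtain ⟨n, hn, hnsw⟩ := hstab t₀
    obtain ⟨n₁, hn₁gt, hn₁sw, -, hb₁, hQ₁⟩ := key n hn hnsw
    obtain ⟨n₂, -, -, hc₂, hb₂, -⟩ := key n₁ (le_trans hn (le_of_lt hn₁gt)) hn₁sw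
    rw [hQ₁] at hc₂
    have hfar := (hQ (S n₁).1 n₁ (hmem n₁)).2.2
    rw [← hc₂] at hfar
    rcases abs_cases (f (S n₂).1 - f (S n₁).1) with ⟨he, -⟩ | ⟨he, -⟩ <;>
      rw [he] at hfar <;>
      [skip; skip] <;>
      linarith [hb₁.1, hb₁.2, hb₂.1, hb₂.2]
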